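/- For every r ∈ (0,1), r·J_1(r)·log r + J_0(r) ≥ 3/4. -/

import Mathlib

open Real Set

/-- Bessel function of the first kind of integer order, via the Poisson integral
representation. -/
noncomputable def besselJ (n : ℕ) (r : ℝ) : ℝ :=
  r ^ n / (2 ^ n * Real.Gamma ((n : ℝ) + 1 / 2) * Real.sqrt Real.pi) *
    ∫ t in (-1 : ℝ)..1, Real.cos (r * t) * (1 - t ^ 2) ^ ((n : ℝ) - 1 / 2)

/-- The integrand `(√(1-x²))⁻¹` is interval integrable on `[-1,1]`. -/
lemma intInt_inv_sqrt : IntervalIntegrable (fun x : ℝ => (Real.sqrt (1 - x ^ 2))⁻¹)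
    MeasureTheory.volume (-1) 1 := by
  apply intervalIntegral.intervalIntegrable_deriv_of_nonneg
    (g := Real.arcsin)
  · exact Real.continuous_arcsin.continuousOn
  · intro x hx
    simp only [min_eq_left, max_eq_right, show (-1:ℝ) ≤ 1 by norm_num] at hx
    have := Real.hasDerivAt_arcsin (ne_of_gt hx.1) (ne_of_lt hx.2)
    simpa [one_div] using this
  · intro x _
    positivity

lemma intVal_inv_sqrt : ∫ x in (-1:ℝ)..1, (Real.sqrt (1 - x ^ 2))⁻¹ = π := by
  have h := intervalIntegral.integral_eq_sub_of_hasDerivAt_of_le (f := Real.arcsin)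
    (f' := fun x => (Real.sqrt (1 - x ^ 2))⁻¹) (by norm_num : (-1:ℝ) ≤ 1)
    Real.continuous_arcsin.continuousOn
    (fun x hx => by
      have := Real.hasDerivAt_arcsin (ne_of_gt hx.1) (ne_of_lt hx.2)
      simpa [one_div] using this)
    intInt_inv_sqrt
  rw [h, Real.arcsin_one, Real.arcsin_neg_one]
  ring

/-- Derivative of `(arcsin t - t √(1-t²))/2` is `t² (√(1-t²))⁻¹` on `(-1,1)`. -/
lemma hasDerivAt_G {x : ℝ} (hx : x ∈ Set.Ioo (-1:ℝ) 1) :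
    HasDerivAt (fun t : ℝ => (Real.arcsin t - t * Real.sqrt (1 - t ^ 2)) / 2)
      (x ^ 2 * (Real.sqrt (1 - x ^ 2))⁻¹) x := by
  have h1 : (0:ℝ) < 1 - x ^ 2 := by nlinarith [hx.1, hx.2]
  have hs : 0 < Real.sqrt (1 - x ^ 2) := Real.sqrt_pos.2 h1
  have hs2 : Real.sqrt (1 - x ^ 2) ^ 2 = 1 - x ^ 2 := Real.sq_sqrt h1.le
  have hd1 : HasDerivAt Real.arcsin (Real.sqrt (1 - x ^ 2))⁻¹ x := by
    have := Real.hasDerivAt_arcsin (ne_of_gt hx.1) (ne_of_lt hx.2)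
    simpa [one_div] using this
  have hsq : HasDerivAt (fun t : ℝ => Real.sqrt (1 - t ^ 2))
      (1 / (2 * Real.sqrt (1 - x ^ 2)) * (-(2 * x))) x := by
    have hinner : HasDerivAt (fun t : ℝ => 1 - t ^ 2) (-(2 * x)) x := by
      simpa using ((hasDerivAt_pow 2 x).const_sub 1)
    exact (Real.hasDerivAt_sqrt h1.ne').comp x hinner
  have hprod : HasDerivAt (fun t : ℝ => t * Real.sqrt (1 - t ^ 2))
      (1 * Real.sqrt (1 - x ^ 2) + x * (1 / (2 * Real.sqrt (1 - x ^ 2)) * (-(2 * x)))) x :=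
    (hasDerivAt_id x).mul hsq
  have := ((hd1.sub hprod).div_const 2)
  refine this.congr_deriv ?_
  field_simp
  nlinarith [hs2, hs]

lemma intInt_sq_inv_sqrt : IntervalIntegrable (fun x : ℝ => x ^ 2 * (Real.sqrt (1 - x ^ 2))⁻¹)
    MeasureTheory.volume (-1) 1 := by
  apply intervalIntegral.intervalIntegrable_deriv_of_nonneg
    (g := fun t : ℝ => (Real.arcsin t - t * Real.sqrt (1 - t ^ 2)) / 2)
  · apply ContinuousOn.div_const
    apply ContinuousOn.sub Real.continuous_arcsin.continuousOn
    exact (continuous_id.mul (Real.continuous_sqrt.comp (by continuity))).continuousOn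
  · intro x hx
    simp only [min_eq_left, max_eq_right, show (-1:ℝ) ≤ 1 by norm_num] at hx
    exact hasDerivAt_G hx
  · intro x _
    positivity

lemma intVal_sq_inv_sqrt : ∫ x in (-1:ℝ)..1, x ^ 2 * (Real.sqrt (1 - x ^ 2))⁻¹ = π / 2 := by
  have h := intervalIntegral.integral_eq_sub_of_hasDerivAt_of_le
    (f := fun t : ℝ => (Real.arcsin t - t * Real.sqrt (1 - t ^ 2)) / 2)
    (f' := fun x => x ^ 2 * (Real.sqrt (1 - x ^ 2))⁻¹) (by norm_num : (-1:ℝ) ≤ 1)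
    (by
      apply ContinuousOn.div_const
      apply ContinuousOn.sub Real.continuous_arcsin.continuousOn
      exact (continuous_id.mul (Real.continuous_sqrt.comp (by continuity))).continuousOn)
    (fun x hx => hasDerivAt_G hx)
    intInt_sq_inv_sqrt
  rw [h, Real.arcsin_one, Real.arcsin_neg_one]
  norm_num
  ring

lemma besselJ_zero_eq (r : ℝ) :
    besselJ 0 r = π⁻¹ * ∫ t in (-1:ℝ)..1, Real.cos (r * t) * (Real.sqrt (1 - t ^ 2))⁻¹ := by
  unfold besselJ
  have h1 : ((0:ℕ):ℝ) + 1/2 = 1/2 := by norm_num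
  rw [h1, Real.Gamma_one_half_eq]
  have h2 : Real.sqrt π * Real.sqrt π = π := Real.mul_self_sqrt Real.pi_pos.le
  have h3 : ∀ t ∈ Set.uIcc (-1:ℝ) 1,
      Real.cos (r * t) * (1 - t ^ 2) ^ (((0:ℕ):ℝ) - 1/2)
        = Real.cos (r * t) * (Real.sqrt (1 - t ^ 2))⁻¹ := by
    intro t ht
    rw [Set.uIcc_of_le (by norm_num : (-1:ℝ) ≤ 1)] at ht
    have hnn : (0:ℝ) ≤ 1 - t ^ 2 := by nlinarith [ht.1, ht.2]
    congr 1
    rw [show ((0:ℕ):ℝ) - 1/2 = -(1/2) by norm_num, Real.rpow_neg hnn, Real.sqrt_eq_rpow]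
  rw [intervalIntegral.integral_congr h3]
  simp only [pow_zero, one_mul]
  rw [h2]
  ring

lemma besselJ_one_eq (r : ℝ) :
    besselJ 1 r = r * π⁻¹ * ∫ t in (-1:ℝ)..1, Real.cos (r * t) * Real.sqrt (1 - t ^ 2) := by
  unfold besselJ
  have h1 : ((1:ℕ):ℝ) + 1/2 = 1/2 + 1 := by norm_num
  rw [h1, Real.Gamma_add_one (by norm_num), Real.Gamma_one_half_eq]
  have h2 : Real.sqrt π * Real.sqrt π = π := Real.mul_self_sqrt Real.pi_pos.le
  have h3 : ∀ t ∈ Set.uIcc (-1:ℝ) 1,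
      Real.cos (r * t) * (1 - t ^ 2) ^ (((1:ℕ):ℝ) - 1/2)
        = Real.cos (r * t) * Real.sqrt (1 - t ^ 2) := by
    intro t ht
    congr 1
    rw [show ((1:ℕ):ℝ) - 1/2 = 1/2 by norm_num, Real.sqrt_eq_rpow]
  rw [intervalIntegral.integral_congr h3]
  have hπ : (0:ℝ) < π := Real.pi_pos
  have h4 : (2:ℝ) ^ 1 * (1 / 2 * Real.sqrt π) * Real.sqrt π = π := by
    rw [pow_one]; nlinarith [h2]
  rw [h4, pow_one]
  ring

lemma besselJ_one_le (r : ℝ) (hr : 0 ≤ r) : besselJ 1 r ≤ r / 2 := by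
  rw [besselJ_one_eq]
  have hπ : (0:ℝ) < π := Real.pi_pos
  have hint : (∫ t in (-1:ℝ)..1, Real.cos (r * t) * Real.sqrt (1 - t ^ 2)) ≤ π / 2 := by
    calc (∫ t in (-1:ℝ)..1, Real.cos (r * t) * Real.sqrt (1 - t ^ 2))
        ≤ ∫ t in (-1:ℝ)..1, Real.sqrt (1 - t ^ 2) := by
          apply intervalIntegral.integral_mono_on (by norm_num)
          · exact (Continuous.intervalIntegrable (by continuity) _ _)
          · exact (Continuous.intervalIntegrable (by continuity) _ _)
          · intro t _
            have := Real.cos_le_one (r * t)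
            nlinarith [Real.sqrt_nonneg (1 - t ^ 2)]
      _ = π / 2 := integral_sqrt_one_sub_sq
  calc r * π⁻¹ * ∫ t in (-1:ℝ)..1, Real.cos (r * t) * Real.sqrt (1 - t ^ 2)
      ≤ r * π⁻¹ * (π / 2) := by
        apply mul_le_mul_of_nonneg_left hint
        positivity
    _ = r / 2 := by field_simp

lemma intInt_cos_inv_sqrt (r : ℝ) :
    IntervalIntegrable (fun t : ℝ => Real.cos (r * t) * (Real.sqrt (1 - t ^ 2))⁻¹)
      MeasureTheory.volume (-1) 1 := by
  apply intInt_inv_sqrt.mono_fun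
  · apply Measurable.aestronglyMeasurable
    exact ((Real.continuous_cos.comp (continuous_const.mul continuous_id)).measurable.mul
      ((Real.continuous_sqrt.comp (by continuity)).measurable.inv))
  · filter_upwards with x
    rw [Real.norm_eq_abs, Real.norm_eq_abs, abs_mul]
    have h1 : |Real.cos (r * x)| ≤ 1 := Real.abs_cos_le_one _
    nlinarith [abs_nonneg (Real.sqrt (1 - x ^ 2))⁻¹]

lemma besselJ_zero_ge (r : ℝ) : besselJ 0 r ≥ 1 - r ^ 2 / 4 := by
  rw [besselJ_zero_eq]
  have hπ : (0:ℝ) < π := Real.pi_pos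
  have hint : (∫ t in (-1:ℝ)..1, Real.cos (r * t) * (Real.sqrt (1 - t ^ 2))⁻¹)
      ≥ π - r ^ 2 / 2 * (π / 2) := by
    have hlow : (∫ t in (-1:ℝ)..1,
        ((Real.sqrt (1 - t ^ 2))⁻¹ - r ^ 2 / 2 * (t ^ 2 * (Real.sqrt (1 - t ^ 2))⁻¹)))
        ≤ ∫ t in (-1:ℝ)..1, Real.cos (r * t) * (Real.sqrt (1 - t ^ 2))⁻¹ := by
      apply intervalIntegral.integral_mono_on (by norm_num)
      · exact intInt_inv_sqrt.sub (intInt_sq_inv_sqrt.const_mul _)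
      · exact intInt_cos_inv_sqrt r
      · intro t _
        have hc : 1 - (r * t) ^ 2 / 2 ≤ Real.cos (r * t) := Real.one_sub_sq_div_two_le_cos
        have hs : (0:ℝ) ≤ (Real.sqrt (1 - t ^ 2))⁻¹ := by positivity
        nlinarith [mul_le_mul_of_nonneg_right hc hs]
    rw [intervalIntegral.integral_sub intInt_inv_sqrt (intInt_sq_inv_sqrt.const_mul _),
      intervalIntegral.integral_const_mul, intVal_inv_sqrt, intVal_sq_inv_sqrt] at hlow
    linarith
  have := mul_le_mul_of_nonneg_left hint (by positivity : (0:ℝ) ≤ π⁻¹)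
  calc π⁻¹ * ∫ t in (-1:ℝ)..1, Real.cos (r * t) * (Real.sqrt (1 - t ^ 2))⁻¹
      ≥ π⁻¹ * (π - r ^ 2 / 2 * (π / 2)) := this
    _ = 1 - r ^ 2 / 4 := by field_simp; ring

theorem denominator_lower_bound (r : ℝ) (hr : r ∈ Set.Ioo (0 : ℝ) 1) :
    r * besselJ 1 r * Real.log r + besselJ 0 r ≥ 3 / 4 := by
  obtain ⟨hr0, hr1⟩ := hr
  have hJ1 : besselJ 1 r ≤ r / 2 := besselJ_one_le r hr0.le
  have hJ0 : besselJ 0 r ≥ 1 - r ^ 2 / 4 := besselJ_zero_ge r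
  have hlog : Real.log r < 0 := Real.log_neg hr0 hr1
  -- log (r⁻¹ * r⁻¹) ≤ r⁻² - 1, i.e. -2 log r ≤ 1/r² - 1
  have hlogb : Real.log (r⁻¹ * r⁻¹) ≤ r⁻¹ * r⁻¹ - 1 :=
    Real.log_le_sub_one_of_pos (by positivity)
  rw [Real.log_mul (by positivity) (by positivity), Real.log_inv] at hlogb
  -- so -2 log r ≤ r⁻² - 1; multiply by r² : -2 r² log r ≤ 1 - r²
  have hr2 : (0:ℝ) < r ^ 2 := by positivity
  have key : r ^ 2 - 1 ≤ 2 * r ^ 2 * Real.log r := by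
    have := mul_le_mul_of_nonneg_left hlogb hr2.le
    have hrr : r ^ 2 * (r⁻¹ * r⁻¹) = 1 := by field_simp
    nlinarith
  -- r * J1 * log r ≥ r * (r/2) * log r since r * log r < 0
  have h1 : r * besselJ 1 r * Real.log r ≥ r * (r / 2) * Real.log r := by
    have hrl : r * Real.log r < 0 := mul_neg_of_pos_of_neg hr0 hlog
    nlinarith
  nlinarith
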